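/- Let X be a set with a left action of the monoid M of injective self-maps of ω = {1,2,3,...}. Let A ⊆ ω be co-infinite (its complement is infinite) and let x ∈ X be fixed by every element of M that fixes A pointwise. Then for any f, g ∈ M that agree on A, we have f.x = g.x. -/
import Mathlib


/-- The monoid of injective self-maps of ω (modelled as ℕ), under composition. -/
def M : Submonoid (Function.End ℕ) where
  carrier := {f | Function.Injective f}
  mul_mem' := fun hf hg => hf.comp hg
  one_mem' := fun _ _ h => h

/-- `x` is supported on `A` if it is fixed by every injection fixing `A` pointwise. -/
def Supported {X : Type*} [MulAction M X] (A : Set ℕ) (x : X) : Prop :=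
  ∀ u : M, (∀ a ∈ A, u.1 a = a) → u • x = x

/-- Key lemma: if `f` and `g` agree on `A` and the images of `Aᶜ` under `f`
and `g` have infinite intersection, then `f • x = g • x` for `x` supported on `A`. -/
theorem key_lemma {X : Type*} [MulAction M X] (A : Set ℕ)
    (x : X) (hx : Supported A x) (f g : M) (hfg : ∀ a ∈ A, f.1 a = g.1 a)
    (hT : (f.1 '' Aᶜ ∩ g.1 '' Aᶜ).Infinite) : f • x = g • x := by
  classical
  set T : Set ℕ := f.1 '' Aᶜ ∩ g.1 '' Aᶜ with hTdef
  let e : ℕ ↪ T := hT.natEmbedding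
  let w : ℕ → ℕ := fun n => if n ∈ A then f.1 n else ((e n : T) : ℕ)
  have hwA : ∀ n ∈ A, w n = f.1 n := fun n hn => if_pos hn
  have hwT : ∀ n, n ∉ A → w n ∈ T := by
    intro n hn
    have : w n = ((e n : T) : ℕ) := if_neg hn
    rw [this]
    exact (e n).2
  have hwinj : Function.Injective w := by
    intro a b hab
    by_cases ha : a ∈ A <;> by_cases hb : b ∈ A
    · rw [hwA a ha, hwA b hb] at hab; exact f.2 hab
    · exfalso
      rw [hwA a ha] at hab
      obtain ⟨c, hc, hcb⟩ := (hwT b hb).1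
      rw [← hab] at hcb
      exact hc (f.2 hcb ▸ ha)
    · exfalso
      rw [hwA b hb] at hab
      obtain ⟨c, hc, hcb⟩ := (hwT a ha).1
      rw [hab] at hcb
      exact hc (f.2 hcb ▸ hb)
    · have h1 : w a = ((e a : T) : ℕ) := if_neg ha
      have h2 : w b = ((e b : T) : ℕ) := if_neg hb
      rw [h1, h2] at hab
      exact e.injective (Subtype.ext hab)
  -- factor w through f
  have hfac : ∀ (p : M), (∀ a ∈ A, p.1 a = w a) →
      (∀ n, n ∉ A → w n ∈ p.1 '' Aᶜ) → p • x = (⟨w, hwinj⟩ : M) • x := by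
    intro p hpA hpIm
    have hu : ∀ n, ∃ m, p.1 m = w n ∧ (n ∈ A → m = n) := by
      intro n
      by_cases hn : n ∈ A
      · exact ⟨n, (hpA n hn).symm ▸ rfl, fun _ => rfl⟩
      · obtain ⟨c, _, hc2⟩ := hpIm n hn
        exact ⟨c, hc2, fun h => absurd h hn⟩
    choose u hu1 hu2 using hu
    have hcomp : p.1 ∘ u = w := funext fun n => hu1 n
    have huinj : Function.Injective u := by
      intro a b hab
      apply hwinj
      rw [← hcomp]
      simp [Function.comp, hab]
    have huA : ∀ a ∈ A, u a = a := fun a ha => hu2 a ha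
    have hux : (⟨u, huinj⟩ : M) • x = x := hx ⟨u, huinj⟩ huA
    calc p • x = p • ((⟨u, huinj⟩ : M) • x) := by rw [hux]
      _ = (p * ⟨u, huinj⟩) • x := (mul_smul _ _ _).symm
      _ = (⟨w, hwinj⟩ : M) • x := by
            congr 1
            exact Subtype.ext hcomp
  have hf : f • x = (⟨w, hwinj⟩ : M) • x :=
    hfac f (fun a ha => (hwA a ha).symm) (fun n hn => (hwT n hn).1)
  have hg : g • x = (⟨w, hwinj⟩ : M) • x := by
    apply hfac g
    · intro a ha
      rw [hwA a ha, hfg a ha]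
    · intro n hn
      exact (hwT n hn).2
  rw [hf, hg]

theorem stmt_0 {X : Type*} [MulAction M X] (A : Set ℕ) (hA : (Aᶜ : Set ℕ).Infinite)
    (x : X) (hx : Supported A x) (f g : M) (hfg : ∀ a ∈ A, f.1 a = g.1 a) :
    f • x = g • x := by
  classical
  by_cases hT : (f.1 '' Aᶜ ∩ g.1 '' Aᶜ).Infinite
  · exact key_lemma A x hx f g hfg hT
  · -- the difference g '' Aᶜ \ f '' Aᶜ is infinite
    have hgim : (g.1 '' Aᶜ).Infinite := hA.image (g.2.injOn)
    have hfim : (f.1 '' Aᶜ).Infinite := hA.image (f.2.injOn)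
    have hD : (g.1 '' Aᶜ \ f.1 '' Aᶜ).Infinite := by
      have heq : g.1 '' Aᶜ \ f.1 '' Aᶜ = g.1 '' Aᶜ \ (f.1 '' Aᶜ ∩ g.1 '' Aᶜ) := by
        ext y; simp +contextual [Set.mem_diff, and_comm]
      rw [heq]
      exact hgim.diff (Set.not_infinite.mp hT)
    -- split Aᶜ into two infinite pieces
    let c : ℕ ↪ (Aᶜ : Set ℕ) := hA.natEmbedding
    let B : Set ℕ := Set.range fun k => ((c (2 * k) : (Aᶜ : Set ℕ)) : ℕ)
    have hBsub : B ⊆ Aᶜ := by rintro _ ⟨k, rfl⟩; exact (c (2 * k)).2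
    have hBinf : B.Infinite := by
      apply Set.infinite_range_of_injective
      intro a b hab
      have := c.injective (Subtype.ext hab)
      omega
    have hABinf : (Aᶜ \ B).Infinite := by
      apply Set.Infinite.mono (s := Set.range fun k => ((c (2 * k + 1) : (Aᶜ : Set ℕ)) : ℕ))
      · rintro _ ⟨k, rfl⟩
        refine ⟨(c (2 * k + 1)).2, ?_⟩
        rintro ⟨j, hj⟩
        have := c.injective (Subtype.ext hj)
        omega
      · apply Set.infinite_range_of_injective
        intro a b hab
        have := c.injective (Subtype.ext hab)
        omega
    -- embeddings into the two target sets
    let ef : ℕ ↪ (f.1 '' Aᶜ : Set ℕ) := hfim.natEmbedding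
    let eD : ℕ ↪ (g.1 '' Aᶜ \ f.1 '' Aᶜ : Set ℕ) := hD.natEmbedding
    let h : ℕ → ℕ := fun n =>
      if n ∈ A then f.1 n else if n ∈ B then ((ef n : _) : ℕ) else ((eD n : _) : ℕ)
    have hhA : ∀ n ∈ A, h n = f.1 n := fun n hn => if_pos hn
    have hhB : ∀ n, n ∉ A → n ∈ B → h n = ((ef n : _) : ℕ) := by
      intro n hn hnB; simp only [h, if_neg hn, if_pos hnB]
    have hhD : ∀ n, n ∉ A → n ∉ B → h n = ((eD n : _) : ℕ) := by
      intro n hn hnB; simp only [h, if_neg hn, if_neg hnB]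
    have hval_f : ∀ n, n ∉ A → n ∈ B → h n ∈ f.1 '' Aᶜ := by
      intro n hn hnB; rw [hhB n hn hnB]; exact (ef n).2
    have hval_D : ∀ n, n ∉ A → n ∉ B → h n ∈ g.1 '' Aᶜ \ f.1 '' Aᶜ := by
      intro n hn hnB; rw [hhD n hn hnB]; exact (eD n).2
    -- h ∉ A values land in f '' Aᶜ ∪ (g''Aᶜ \ f''Aᶜ), disjoint from f '' A = g '' A
    have hinj : Function.Injective h := by
      intro a b hab
      by_cases ha : a ∈ A <;> by_cases hb : b ∈ A
      · rw [hhA a ha, hhA b hb] at hab; exact f.2 hab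
      · exfalso
        rw [hhA a ha] at hab
        by_cases hbB : b ∈ B
        · obtain ⟨d, hd, hd2⟩ := hval_f b hb hbB
          rw [← hab] at hd2
          exact hd (f.2 hd2 ▸ ha)
        · obtain ⟨⟨d, hd, hd2⟩, _⟩ := hval_D b hb hbB
          rw [← hab, hfg a ha] at hd2
          exact hd (g.2 hd2 ▸ ha)
      · exfalso
        rw [hhA b hb] at hab
        by_cases haB : a ∈ B
        · obtain ⟨d, hd, hd2⟩ := hval_f a ha haB
          rw [hab] at hd2
          exact hd (f.2 hd2 ▸ hb)
        · obtain ⟨⟨d, hd, hd2⟩, _⟩ := hval_D a ha haB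
          rw [hab, hfg b hb] at hd2
          exact hd (g.2 hd2 ▸ hb)
      · by_cases haB : a ∈ B <;> by_cases hbB : b ∈ B
        · rw [hhB a ha haB, hhB b hb hbB] at hab
          exact ef.injective (Subtype.ext hab)
        · exfalso
          have h1 := hval_f a ha haB
          have h2 := hval_D b hb hbB
          rw [hab] at h1
          exact h2.2 h1
        · exfalso
          have h1 := hval_f b hb hbB
          have h2 := hval_D a ha haB
          rw [← hab] at h1
          exact h2.2 h1
        · rw [hhD a ha haB, hhD b hb hbB] at hab
          exact eD.injective (Subtype.ext hab)
    let hM : M := ⟨h, hinj⟩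
    have hfh : ∀ a ∈ A, f.1 a = hM.1 a := fun a ha => (hhA a ha).symm
    have hhg : ∀ a ∈ A, hM.1 a = g.1 a := fun a ha => (hhA a ha).trans (hfg a ha)
    -- intersection of images is infinite on both sides
    have hint1 : (f.1 '' Aᶜ ∩ hM.1 '' Aᶜ).Infinite := by
      apply Set.Infinite.mono (s := h '' B)
      · rintro _ ⟨n, hn, rfl⟩
        have hnA : n ∉ A := hBsub hn
        exact ⟨hval_f n hnA hn, ⟨n, hnA, rfl⟩⟩
      · exact hBinf.image (hinj.injOn)
    have hint2 : (hM.1 '' Aᶜ ∩ g.1 '' Aᶜ).Infinite := by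
      apply Set.Infinite.mono (s := h '' (Aᶜ \ B))
      · rintro _ ⟨n, ⟨hnA, hnB⟩, rfl⟩
        exact ⟨⟨n, hnA, rfl⟩, (hval_D n hnA hnB).1⟩
      · exact hABinf.image (hinj.injOn)
    calc f • x = hM • x := key_lemma A x hx f hM hfh hint1
      _ = g • x := key_lemma A x hx hM g hhg hint2
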